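/- Let m₀, i : ℝ → ℝ → ℝ be continuous and S₀ : ℝ → ℝ. Define S(t,a) := S₀(t−a)·exp(−∫₀ᵃ (m₀(t−a+τ,τ) + i(t−a+τ,τ)) dτ). Then for every (t,a) ∈ ℝ², the function s ↦ S(t+s, a+s) has derivative −(m₀(t,a) + i(t,a))·S(t,a) at s = 0, and S(u,0) = S₀(u) for every u ∈ ℝ. (That is, S solves the Cauchy problem (∂ₜ+∂ₐ)S = −(m₀+i)·S with initial condition S(t−a,0) = S₀(t−a).) -/

import Mathlib

/-- The function `S(t,a) = S₀(t−a)·exp(−∫₀ᵃ (m₀(t−a+τ,τ) + i(t−a+τ,τ)) dτ)` solves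
the Cauchy problem `(∂ₜ+∂ₐ)S = −(m₀+i)·S` with initial condition `S(u,0) = S₀(u)`. -/
theorem keiding_S_solves_cauchy_problem
    (m₀ i : ℝ → ℝ → ℝ)
    (hm₀ : Continuous fun q : ℝ × ℝ => m₀ q.1 q.2)
    (hi : Continuous fun q : ℝ × ℝ => i q.1 q.2)
    (S₀ : ℝ → ℝ) (S : ℝ → ℝ → ℝ)
    (hS : ∀ t a : ℝ, S t a = S₀ (t - a) *
      Real.exp (-∫ τ in (0:ℝ)..a, (m₀ (t - a + τ) τ + i (t - a + τ) τ))) :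
    (∀ t a : ℝ, HasDerivAt (fun s : ℝ => S (t + s) (a + s))
      (-(m₀ t a + i t a) * S t a) 0) ∧
    (∀ u : ℝ, S u 0 = S₀ u) := by
  constructor
  · intro t a
    set g : ℝ → ℝ := fun τ => m₀ (t - a + τ) τ + i (t - a + τ) τ with hg_def
    have hg : Continuous g := by
      have h1 : Continuous fun τ : ℝ => (t - a + τ, τ) := by fun_prop
      exact (hm₀.comp h1).add (hi.comp h1)
    -- derivative of F x = ∫₀ˣ g at a is g a
    have hF : HasDerivAt (fun x => ∫ τ in (0:ℝ)..x, g τ) (g a) a :=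
      intervalIntegral.integral_hasDerivAt_right (hg.intervalIntegrable 0 a)
        (hg.stronglyMeasurableAtFilter _ _) hg.continuousAt
    have hadd : HasDerivAt (fun s : ℝ => a + s) 1 0 :=
      (hasDerivAt_id 0).const_add a
    have hFa : HasDerivAt (fun s : ℝ => ∫ τ in (0:ℝ)..(a + s), g τ) (g a) 0 := by
      have hF' : HasDerivAt (fun x => ∫ τ in (0:ℝ)..x, g τ) (g a) (a + 0) := by
        simpa using hF
      have h := hF'.comp 0 hadd
      rw [mul_one] at h
      exact h
    have hexp : HasDerivAt (fun s : ℝ =>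
        Real.exp (-∫ τ in (0:ℝ)..(a + s), g τ))
        (Real.exp (-∫ τ in (0:ℝ)..a, g τ) * (-g a)) 0 := by
      have := (hFa.neg).exp
      simpa [mul_comm] using this
    have hmain : HasDerivAt (fun s : ℝ =>
        S₀ (t - a) * Real.exp (-∫ τ in (0:ℝ)..(a + s), g τ))
        (S₀ (t - a) * (Real.exp (-∫ τ in (0:ℝ)..a, g τ) * (-g a))) 0 :=
      hexp.const_mul _
    have heq : (fun s : ℝ => S (t + s) (a + s)) =
        fun s : ℝ => S₀ (t - a) * Real.exp (-∫ τ in (0:ℝ)..(a + s), g τ) := by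
      funext s
      rw [hS]
      have : t + s - (a + s) = t - a := by ring
      rw [this]
    rw [heq, hS t a]
    convert hmain using 1
    simp [hg_def]
    ring
  · intro u
    simp [hS u 0]
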